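/- Let U ⊆ ℝ^p × ℝ^q be an open set and let F : U → ℝ be a C^∞ map such that F(x,0) = 0 whenever (x,0) ∈ U. Then the function F̃ : Ω_V^U → ℝ defined by F̃(x,ξ,t) = (1/t)·F(x,tξ) for t ≠ 0 and F̃(x,ξ,0) = (∂F/∂ξ)(x,0)·ξ is a C^∞ map on Ω_V^U (in the sense of ContDiffOn, with one-sided derivatives in t at the boundary). -/

import Mathlib

open Set MeasureTheory intervalIntegral

theorem my_parametric_contDiff {E : Type} [NormedAddCommGroup E] [NormedSpace ℝ E]
    [ProperSpace E] (n : ℕ) :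
    ∀ {G : Type} [NormedAddCommGroup G] [NormedSpace ℝ G] [CompleteSpace G]
      (H : E × ℝ → G), ContDiff ℝ n H →
      ContDiff ℝ n (fun z : E => ∫ s in (0:ℝ)..1, H (z, s)) := by
  induction n with
  | zero =>
    intro G _ _ _ H hH
    rw [show ((0:ℕ):WithTop ℕ∞) = 0 from rfl, contDiff_zero] at hH ⊢
    exact continuous_parametric_intervalIntegral_of_continuous'
      (f := fun z s => H (z, s)) (μ := volume)
      (hH.comp (continuous_fst.prodMk continuous_snd)) 0 1
  | succ n ih =>
    intro G _ _ _ H hH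
    have hcast : ((n + 1 : ℕ) : WithTop ℕ∞) = (n : WithTop ℕ∞) + 1 := by norm_cast
    rw [hcast, contDiff_succ_iff_fderiv] at hH ⊢
    obtain ⟨hdiff, -, hfd⟩ := hH
    set H' : E × ℝ → (E →L[ℝ] G) := fun w => (fderiv ℝ H w).comp (.inl ℝ E ℝ) with hH'
    have hH'c : ContDiff ℝ n H' := hfd.clm_comp contDiff_const
    have key : ∀ z₀ : E, HasFDerivAt (fun z : E => ∫ s in (0:ℝ)..1, H (z, s))
        (∫ s in (0:ℝ)..1, H' (z₀, s)) z₀ := by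
      intro z₀
      haveI : SecondCountableTopologyEither ℝ (E →L[ℝ] G) := ⟨Or.inl inferInstance⟩
      have hK : IsCompact (Metric.closedBall z₀ 1 ×ˢ Icc (0:ℝ) 1) :=
        (isCompact_closedBall _ _).prod isCompact_Icc
      obtain ⟨C, hC⟩ := hK.exists_bound_of_continuousOn hH'c.continuous.continuousOn
      apply intervalIntegral.hasFDerivAt_integral_of_dominated_of_fderiv_le
        (F' := fun x s => H' (x, s)) (bound := fun _ => C) (Metric.ball_mem_nhds z₀ one_pos)
      · exact Filter.Eventually.of_forall fun x =>
          (hdiff.continuous.comp (Continuous.prodMk_right x)).aestronglyMeasurable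
      · exact (hdiff.continuous.comp (Continuous.prodMk_right z₀)).intervalIntegrable 0 1
      · exact (hH'c.continuous.comp (Continuous.prodMk_right z₀)).aestronglyMeasurable
      · refine Filter.Eventually.of_forall fun s hs x hx =>
          hC (x, s) ⟨Metric.ball_subset_closedBall hx, ?_⟩
        rw [uIoc_of_le (by norm_num : (0:ℝ) ≤ 1)] at hs
        exact Ioc_subset_Icc_self hs
      · exact intervalIntegrable_const
      · refine Filter.Eventually.of_forall fun s hs x hx => ?_
        exact (hdiff (x, s)).hasFDerivAt.comp x (hasFDerivAt_prodMk_left x s)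
    refine ⟨fun z => (key z).differentiableAt, by simp, ?_⟩
    have : (fderiv ℝ fun z : E => ∫ s in (0:ℝ)..1, H (z, s)) =
        fun z : E => ∫ s in (0:ℝ)..1, H' (z, s) := funext fun z => (key z).fderiv
    rw [this]
    exact ih _ hH'c


noncomputable section

/-- Points of `ℝ^p × ℝ^q × [0,1]` (the interval condition is imposed via the set `Omega`). -/
abbrev Pt (p q : ℕ) := (Fin p → ℝ) × (Fin q → ℝ) × ℝ

/-- `Ω_V^U = {(x,ξ,t) ∈ ℝ^p × ℝ^q × [0,1] : (x, tξ) ∈ U}`. -/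
def Omega {p q : ℕ} (U : Set ((Fin p → ℝ) × (Fin q → ℝ))) : Set (Pt p q) :=
  {z | z.2.2 ∈ Icc (0 : ℝ) 1 ∧ (z.1, z.2.2 • z.2.1) ∈ U}

/-- For `F : ℝ^p × ℝ^q → ℝ` with `F(x,0) = 0`, the rescaled map
`F̃(x,ξ,t) = (1/t)·F(x,tξ)` for `t ≠ 0`, `F̃(x,ξ,0) = (∂F/∂ξ)(x,0)·ξ`. -/
noncomputable def FtildeR {p q : ℕ} (F : (Fin p → ℝ) × (Fin q → ℝ) → ℝ) : Pt p q → ℝ :=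
  fun z =>
    if z.2.2 = 0 then fderiv ℝ (fun ξ : Fin q → ℝ => F (z.1, ξ)) 0 z.2.1
    else z.2.2⁻¹ * F (z.1, z.2.2 • z.2.1)

/-- the scalar case of Lemma 3.4 of the paper: `F̃` is `C^∞` on `Ω_V^U`
(in the sense of `ContDiffOn`, with one-sided derivatives in `t` at the boundary). -/
theorem stmt2 {p q : ℕ} (U : Set ((Fin p → ℝ) × (Fin q → ℝ))) (hU : IsOpen U)
    (F : (Fin p → ℝ) × (Fin q → ℝ) → ℝ) (hF : ContDiffOn ℝ (⊤ : ℕ∞) F U)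
    (hF0 : ∀ x : Fin p → ℝ, (x, (0 : Fin q → ℝ)) ∈ U → F (x, 0) = 0) :
    ContDiffOn ℝ (⊤ : ℕ∞) (FtildeR F) (Omega U) := by
  intro z₀ hz₀
  obtain ⟨ht01, hzU⟩ := hz₀
  by_cases ht : z₀.2.2 = 0
  case neg =>
    have hsm : ContDiff ℝ ((⊤:ℕ∞) : WithTop ℕ∞) (fun z : Pt p q => (z.1, z.2.2 • z.2.1)) :=
      contDiff_fst.prodMk ((contDiff_snd.comp contDiff_snd).smul (contDiff_fst.comp contDiff_snd))
    have hFat : ContDiffAt ℝ ((⊤:ℕ∞) : WithTop ℕ∞) F (z₀.1, z₀.2.2 • z₀.2.1) :=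
      hF.contDiffAt (hU.mem_nhds hzU)
    have h1 : ContDiffAt ℝ ((⊤:ℕ∞) : WithTop ℕ∞)
        (fun z : Pt p q => z.2.2⁻¹ * F (z.1, z.2.2 • z.2.1)) z₀ :=
      (((contDiff_snd.comp contDiff_snd).contDiffAt (x := z₀)).inv ht).mul
        (hFat.comp z₀ hsm.contDiffAt)
    have hopen : {z : Pt p q | z.2.2 ≠ 0} ∈ nhds z₀ :=
      (isOpen_compl_singleton.preimage (continuous_snd.comp continuous_snd)).mem_nhds ht
    have heq : ∀ᶠ z : Pt p q in nhds z₀,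
        FtildeR F z = z.2.2⁻¹ * F (z.1, z.2.2 • z.2.1) := by
      filter_upwards [hopen] with z hz
      simp only [FtildeR, if_neg hz]
    exact ((h1.congr_of_eventuallyEq heq).contDiffWithinAt)
  case pos =>
    rw [ht, zero_smul] at hzU
    obtain ⟨ε, hε, hball⟩ := Metric.nhds_basis_closedBall.mem_iff.1 (hU.mem_nhds hzU)
    set c : (Fin p → ℝ) × (Fin q → ℝ) := (z₀.1, 0) with hc
    let χ : ContDiffBump c := ⟨ε/2, ε, by positivity, by linarith⟩
    set g : (Fin p → ℝ) × (Fin q → ℝ) → ℝ := fun w => χ w * F w with hgdef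
    have hg : ContDiff ℝ ((⊤:ℕ∞) : WithTop ℕ∞) g := by
      rw [contDiff_iff_contDiffAt]
      intro w
      by_cases hw : w ∈ U
      · exact χ.contDiff.contDiffAt.mul (hF.contDiffAt (hU.mem_nhds hw))
      · have hw' : w ∉ tsupport (χ : _ → ℝ) := fun hmem => hw (hball (χ.tsupport_eq ▸ hmem))
        have hev : ∀ᶠ u in nhds w, g u = (0:ℝ) := by
          filter_upwards [(isClosed_tsupport (χ : _ → ℝ)).isOpen_compl.mem_nhds hw'] with u hu
          simp [hgdef, image_eq_zero_of_notMem_tsupport hu]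
        exact contDiffAt_const.congr_of_eventuallyEq hev
    have hgF : ∀ w ∈ Metric.closedBall c (ε/2), g w = F w := fun w hw => by
      rw [hgdef]; simp only; rw [χ.one_of_mem_closedBall hw, one_mul]
    have hgd : Differentiable ℝ g := hg.differentiable (by norm_num)
    have hfdg : ContDiff ℝ ((⊤:ℕ∞) : WithTop ℕ∞) (fderiv ℝ g) := hg.fderiv_right (by simp)
    -- the integrand
    set H : Pt p q × ℝ → ℝ :=
      fun w => fderiv ℝ g (w.1.1, (w.2 * w.1.2.2) • w.1.2.1) (0, w.1.2.1) with hHdef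
    have hφ : ContDiff ℝ ((⊤:ℕ∞) : WithTop ℕ∞)
        (fun w : Pt p q × ℝ => ((w.1.1, (w.2 * w.1.2.2) • w.1.2.1) :
          (Fin p → ℝ) × (Fin q → ℝ))) := by
      apply (contDiff_fst.comp contDiff_fst).prodMk
      exact (contDiff_snd.mul ((contDiff_snd.comp contDiff_snd).comp contDiff_fst)).smul
        ((contDiff_fst.comp contDiff_snd).comp contDiff_fst)
    have hH : ContDiff ℝ ((⊤:ℕ∞) : WithTop ℕ∞) H := by
      apply ContDiff.clm_apply (hfdg.comp hφ)
      exact contDiff_const.prodMk ((contDiff_fst.comp contDiff_snd).comp contDiff_fst)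
    set G : Pt p q → ℝ := fun z => ∫ s in (0:ℝ)..1, H (z, s) with hGdef
    have hG : ContDiff ℝ ((⊤:ℕ∞) : WithTop ℕ∞) G := by
      rw [contDiff_infty]
      intro n
      exact my_parametric_contDiff n H (hH.of_le (by exact_mod_cast le_top))
    set W : Set (Pt p q) := {z | dist z.1 z₀.1 < ε/2 ∧ ‖z.2.2 • z.2.1‖ < ε/2} with hWdef
    have hWopen : IsOpen W := by
      apply IsOpen.inter
      · exact isOpen_lt ((continuous_fst.dist continuous_const)) continuous_const
      · exact isOpen_lt ((continuous_snd.comp continuous_snd).smul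
          (continuous_fst.comp continuous_snd)).norm continuous_const
    have hzW : z₀ ∈ W := by
      constructor
      · simpa using (by positivity : (0:ℝ) < ε/2)
      · rw [ht, zero_smul]; simpa using (by positivity : (0:ℝ) < ε/2)
    have hmem : ∀ z ∈ W, ∀ s : ℝ, |s| ≤ 1 →
        ((z.1, s • (z.2.2 • z.2.1)) : (Fin p → ℝ) × (Fin q → ℝ)) ∈
          Metric.closedBall c (ε/2) := by
      rintro z ⟨hz1, hz2⟩ s hs
      rw [Metric.mem_closedBall, hc, Prod.dist_eq]
      apply max_le hz1.le
      rw [dist_zero_right, norm_smul]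
      calc ‖s‖ * ‖z.2.2 • z.2.1‖ ≤ 1 * ‖z.2.2 • z.2.1‖ := by
            apply mul_le_mul_of_nonneg_right _ (norm_nonneg _)
            simpa using hs
        _ ≤ ε/2 := by rw [one_mul]; exact hz2.le
    have heqFG : ∀ z ∈ W, FtildeR F z = G z := by
      intro z hz
      set x := z.1 with hx
      set ξ := z.2.1 with hξ
      set t := z.2.2 with htdef
      set v : Fin q → ℝ := t • ξ with hv
      -- FTC computation
      have hcurve : ∀ s ∈ uIcc (0:ℝ) 1,
          HasDerivAt (fun s : ℝ => g (x, s • v)) (fderiv ℝ g (x, s • v) (0, v)) s := by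
        intro s _
        have h1 : HasDerivAt (fun s : ℝ => s • v) v s := by
          simpa using (hasDerivAt_id s).smul_const v
        have h2 : HasDerivAt (fun s : ℝ => ((x, s • v) : (Fin p → ℝ) × (Fin q → ℝ)))
            (((0 : Fin p → ℝ), v)) s := (hasDerivAt_const s x).prodMk h1
        exact ((hgd (x, s • v)).hasFDerivAt.comp_hasDerivAt s h2)
      have hcont : Continuous fun s : ℝ => fderiv ℝ g (x, s • v) (0, v) := by
        apply Continuous.clm_apply _ continuous_const
        exact hfdg.continuous.comp (continuous_const.prodMk (continuous_id.smul continuous_const))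
      have hFTC : ∫ s in (0:ℝ)..1, fderiv ℝ g (x, s • v) (0, v) = F (x, v) := by
        rw [intervalIntegral.integral_eq_sub_of_hasDerivAt hcurve
          (hcont.intervalIntegrable 0 1)]
        have e1 : g (x, (1:ℝ) • v) = F (x, v) := by
          rw [one_smul]; exact hgF _ (by simpa using hmem z hz 1 (by norm_num))
        have e0 : g (x, (0:ℝ) • v) = 0 := by
          rw [zero_smul]
          have hmem0 := hmem z hz 0 (by norm_num)
          rw [zero_smul] at hmem0
          rw [hgF _ hmem0]
          exact hF0 x (hball (Metric.closedBall_subset_closedBall (by linarith) hmem0))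
        rw [e1, e0, sub_zero]
      have hGz : G z = ∫ s in (0:ℝ)..1, fderiv ℝ g (x, s • v) (0, ξ) := by
        rw [hGdef]
        simp only [hHdef, mul_smul]
        rfl
      by_cases ht0 : t = 0
      · -- t = 0
        show (if z.2.2 = 0 then _ else _) = G z
        rw [if_pos (show z.2.2 = 0 from ht0)]
        have hv0 : v = 0 := by rw [hv, ht0, zero_smul]
        rw [hGz, hv0]
        simp only [smul_zero]
        rw [intervalIntegral.integral_const]
        simp only [sub_zero, one_smul]
        have hev : (fun ξ' : Fin q → ℝ => F (x, ξ')) =ᶠ[nhds 0]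
            (fun ξ' : Fin q → ℝ => g (x, ξ')) := by
          filter_upwards [Metric.ball_mem_nhds (0 : Fin q → ℝ) (by positivity : (0:ℝ) < ε/2)]
            with ξ' hξ'
          refine (hgF (x, ξ') ?_).symm
          rw [Metric.mem_closedBall, hc, Prod.dist_eq]
          exact max_le hz.1.le (Metric.mem_ball.1 hξ').le
        rw [hev.fderiv_eq]
        have hcomp : HasFDerivAt (fun ξ' : Fin q → ℝ => g (x, ξ'))
            ((fderiv ℝ g (x, 0)).comp (ContinuousLinearMap.inr ℝ _ _)) 0 :=
          (hgd (x, (0 : Fin q → ℝ))).hasFDerivAt.comp 0 (hasFDerivAt_prodMk_right x 0)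
        rw [hcomp.fderiv]
        rfl
      · -- t ≠ 0
        show (if z.2.2 = 0 then _ else _) = G z
        rw [if_neg (show ¬ z.2.2 = 0 from ht0)]
        rw [hGz]
        have hsc : ∀ s : ℝ, fderiv ℝ g (x, s • v) (0, ξ) =
            t⁻¹ • (fderiv ℝ g (x, s • v) ((0 : Fin p → ℝ), v)) := by
          intro s
          rw [← (fderiv ℝ g (x, s • v)).map_smul]
          congr 1
          rw [Prod.smul_mk, smul_zero, hv, inv_smul_smul₀ ht0]
        simp_rw [hsc]
        rw [intervalIntegral.integral_smul, hFTC]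
        simp [smul_eq_mul]
        rfl
    have hGat : ContDiffAt ℝ ((⊤:ℕ∞) : WithTop ℕ∞) G z₀ := hG.contDiffAt
    have hfin := hGat.congr_of_eventuallyEq
      (Filter.eventually_of_mem (hWopen.mem_nhds hzW) heqFG)
    exact hfin.contDiffWithinAt
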